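/- Let Φ : ℝ^N → ℝ satisfy (λ|A| − 1)₊ ≤ Φ(A) ≤ Λ|A| + 1 for all A ∈ ℝ^N, where 0 < λ ≤ Λ. Assume Φ is differentiable on ℝ^N with q := ∇Φ satisfying |q(A)| ≤ Λ for all A, and that the convexification Φ** is differentiable on ℝ^N. Let ν₁, ν₂ be Borel probability measures on ℝ^N concentrated on the contact set B := {A ∈ ℝ^N : Φ**(A) = Φ(A)} and with finite first moments. Then ∫ q(A)·A dν₁(A) + ∫ q(B)·B dν₂(B) − (∫ q(B) dν₂(B)) · (∫ A dν₁(A)) − (∫ q(A) dν₁(A)) · (∫ B dν₂(B)) ≥ 0. -/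

import Mathlib

open MeasureTheory

open InnerProductSpace in
/-- Subgradient inequality for a differentiable convex function. -/
lemma convex_grad_le' {F : Type*} [NormedAddCommGroup F] [InnerProductSpace ℝ F] [CompleteSpace F]
    {f : F → ℝ} (hf : ConvexOn ℝ Set.univ f) {x y gx : F}
    (hx : HasGradientAt f gx x) :
    (inner ℝ gx (y - x) : ℝ) ≤ f y - f x := by
  set L : ℝ → F := fun t => t • (y - x) + x with hL
  have hconv : ConvexOn ℝ Set.univ (f ∘ L) := by
    have := hf.comp_affineMap
      ((LinearMap.toSpanSingleton ℝ F (y - x)).toAffineMap + AffineMap.const ℝ ℝ x)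
    simpa [Function.comp_def, hL, Pi.add_def] using this
  have hLd : HasDerivAt L (y - x) 0 := by
    have : HasDerivAt (fun t : ℝ => t • (y - x) + x) ((1:ℝ) • (y - x)) 0 :=
      ((hasDerivAt_id (0:ℝ)).smul_const (y - x)).add_const x
    simpa only [one_smul] using this
  have hL0 : L 0 = x := by simp [hL]
  have hfd : HasFDerivAt f (toDual ℝ F gx) (L 0) := by rw [hL0]; exact hx
  have hφ : HasDerivAt (f ∘ L) ((inner ℝ gx (y - x) : ℝ)) 0 := by
    have := hfd.comp_hasDerivAt 0 hLd
    simpa [toDual_apply_apply] using this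
  have := hconv.le_slope_of_hasDerivAt (Set.mem_univ 0) (Set.mem_univ 1) zero_lt_one hφ
  rw [slope_def_field] at this
  simpa [hL] using this

/-- Monotonicity of the gradient of a convex function. -/
lemma convex_grad_mono' {F : Type*} [NormedAddCommGroup F] [InnerProductSpace ℝ F] [CompleteSpace F]
    {f : F → ℝ} (hf : ConvexOn ℝ Set.univ f) {x y gx gy : F}
    (hx : HasGradientAt f gx x) (hy : HasGradientAt f gy y) :
    (0 : ℝ) ≤ inner ℝ (gx - gy) (x - y) := by
  have h1 := convex_grad_le' hf hx (y := y)
  have h2 := convex_grad_le' hf hy (y := x)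
  have h3 : (inner ℝ gx (y - x) : ℝ) + inner ℝ gy (x - y) ≤ 0 := by linarith
  have e : (inner ℝ (gx - gy) (x - y) : ℝ)
      = -((inner ℝ gx (y - x) : ℝ) + inner ℝ gy (x - y)) := by
    simp [inner_sub_left, inner_sub_right]; ring
  rw [e]; linarith

/-- The convex envelope (convexification) `Φ**` of `Φ`: the pointwise supremum
of all convex functions lying below `Φ`. -/
noncomputable def convexEnvelope {N : ℕ}
    (Φ : EuclideanSpace ℝ (Fin N) → ℝ) (A : EuclideanSpace ℝ (Fin N)) : ℝ :=
  sSup {y : ℝ | ∃ g : EuclideanSpace ℝ (Fin N) → ℝ,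
    ConvexOn ℝ Set.univ g ∧ (∀ z, g z ≤ Φ z) ∧ y = g A}

section envAux
variable {N : ℕ} {Φ : EuclideanSpace ℝ (Fin N) → ℝ}

lemma env_mem_zero (hΦ0 : ∀ z, 0 ≤ Φ z) (A : EuclideanSpace ℝ (Fin N)) :
    (0:ℝ) ∈ {y : ℝ | ∃ g : EuclideanSpace ℝ (Fin N) → ℝ,
      ConvexOn ℝ Set.univ g ∧ (∀ z, g z ≤ Φ z) ∧ y = g A} :=
  ⟨fun _ => 0, convexOn_const 0 convex_univ, fun z => hΦ0 z, rfl⟩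

lemma env_bddAbove (A : EuclideanSpace ℝ (Fin N)) :
    BddAbove {y : ℝ | ∃ g : EuclideanSpace ℝ (Fin N) → ℝ,
      ConvexOn ℝ Set.univ g ∧ (∀ z, g z ≤ Φ z) ∧ y = g A} :=
  ⟨Φ A, fun y ⟨g, _, hg, hy⟩ => hy ▸ hg A⟩

lemma env_le (hΦ0 : ∀ z, 0 ≤ Φ z) (A : EuclideanSpace ℝ (Fin N)) :
    convexEnvelope Φ A ≤ Φ A :=
  csSup_le ⟨0, env_mem_zero hΦ0 A⟩ (fun y ⟨g, _, hg, hy⟩ => hy ▸ hg A)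

lemma le_env {g : EuclideanSpace ℝ (Fin N) → ℝ} (hgc : ConvexOn ℝ Set.univ g)
    (hg : ∀ z, g z ≤ Φ z) (A : EuclideanSpace ℝ (Fin N)) : g A ≤ convexEnvelope Φ A :=
  le_csSup (env_bddAbove A) ⟨g, hgc, hg, rfl⟩

lemma env_convex (hΦ0 : ∀ z, 0 ≤ Φ z) : ConvexOn ℝ Set.univ (convexEnvelope Φ) := by
  refine ⟨convex_univ, fun x _ y _ a b ha hb hab => ?_⟩
  refine csSup_le ⟨0, env_mem_zero hΦ0 _⟩ ?_
  rintro z ⟨g, hgc, hg, rfl⟩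
  calc g (a • x + b • y) ≤ a * g x + b * g y := by
        simpa using hgc.2 (Set.mem_univ x) (Set.mem_univ y) ha hb hab
    _ ≤ a * convexEnvelope Φ x + b * convexEnvelope Φ y := by
        have h1 := le_env hgc hg x
        have h2 := le_env hgc hg y
        nlinarith
    _ = a • convexEnvelope Φ x + b • convexEnvelope Φ y := by simp

open InnerProductSpace in
/-- Equality of gradients on the contact set. -/
lemma grad_eq_on_contact {E : EuclideanSpace ℝ (Fin N) → ℝ}
    (hEle : ∀ z, E z ≤ Φ z) {A gq gp : EuclideanSpace ℝ (Fin N)}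
    (hEq : E A = Φ A) (hq : HasGradientAt Φ gq A) (hpA : HasGradientAt E gp A) :
    gq = gp := by
  have hmin : IsLocalMin (fun z => Φ z - E z) A := by
    apply Filter.Eventually.of_forall
    intro z
    simp only [hEq]
    linarith [hEle z]
  have hd : HasFDerivAt (fun z => Φ z - E z)
      (toDual ℝ _ gq - toDual ℝ _ gp) A := (hq.hasFDerivAt.sub hpA.hasFDerivAt)
  have h0 := hmin.hasFDerivAt_eq_zero hd
  have heq : toDual ℝ (EuclideanSpace ℝ (Fin N)) gq = toDual ℝ _ gp := by
    rwa [sub_eq_zero] at h0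
  exact (toDual ℝ (EuclideanSpace ℝ (Fin N))).injective heq

open InnerProductSpace in
lemma q_meas (Φ : EuclideanSpace ℝ (Fin N) → ℝ)
    (q : EuclideanSpace ℝ (Fin N) → EuclideanSpace ℝ (Fin N))
    (hq : ∀ x, HasGradientAt Φ (q x) x) : Measurable q := by
  have hqe : q = fun x =>
      (toDual ℝ (EuclideanSpace ℝ (Fin N))).symm (fderiv ℝ Φ x) := by
    funext x
    rw [HasFDerivAt.fderiv (hq x)]
    simp
  rw [hqe]
  exact ((toDual ℝ (EuclideanSpace ℝ (Fin N))).symm.continuous.measurable).comp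
    (measurable_fderiv ℝ Φ)

variable (ν : Measure (EuclideanSpace ℝ (Fin N)))
  (hmom : Integrable (fun A : EuclideanSpace ℝ (Fin N) => ‖A‖) ν)

lemma id_int (hmom : Integrable (fun A : EuclideanSpace ℝ (Fin N) => ‖A‖) ν) :
    Integrable (fun A : EuclideanSpace ℝ (Fin N) => A) ν :=
  (integrable_norm_iff measurable_id.aestronglyMeasurable).mp hmom

lemma q_int (Φ : EuclideanSpace ℝ (Fin N) → ℝ)
    (q : EuclideanSpace ℝ (Fin N) → EuclideanSpace ℝ (Fin N))
    (hq : ∀ x, HasGradientAt Φ (q x) x) (Lam : ℝ) (hqb : ∀ A, ‖q A‖ ≤ Lam)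
    [IsFiniteMeasure ν] : Integrable q ν :=
  Integrable.mono' (integrable_const Lam) (q_meas Φ q hq).aestronglyMeasurable
    (Filter.Eventually.of_forall hqb)

lemma qB_int (Φ : EuclideanSpace ℝ (Fin N) → ℝ)
    (q : EuclideanSpace ℝ (Fin N) → EuclideanSpace ℝ (Fin N))
    (hq : ∀ x, HasGradientAt Φ (q x) x) (Lam : ℝ) (hqb : ∀ A, ‖q A‖ ≤ Lam)
    (hmom : Integrable (fun A : EuclideanSpace ℝ (Fin N) => ‖A‖) ν) :
    Integrable (fun B => (inner ℝ (q B) B : ℝ)) ν := by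
  refine Integrable.mono' (hmom.const_mul Lam)
    (((q_meas Φ q hq).inner measurable_id).aestronglyMeasurable) ?_
  refine Filter.Eventually.of_forall fun B => ?_
  rw [Real.norm_eq_abs]
  calc |(inner ℝ (q B) B : ℝ)| ≤ ‖q B‖ * ‖B‖ := abs_real_inner_le_norm _ _
    _ ≤ Lam * ‖B‖ := by nlinarith [hqb B, norm_nonneg B]

end envAux

/-- **Two-measure monotonicity inequality** (the absolutely continuous part
`I₁ ≥ 0` in the uniqueness proof): for probability measures `ν₁, ν₂`
concentrated on the contact set `B = {Φ** = Φ}` with finite first moments,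
`∫ q·A dν₁ + ∫ q·B dν₂ − (∫ q dν₂)·(∫ A dν₁) − (∫ q dν₁)·(∫ B dν₂) ≥ 0`. -/
theorem two_measure_monotonicity {N : ℕ} (lam Lam : ℝ)
    (hlam : 0 < lam) (hlL : lam ≤ Lam)
    (Φ : EuclideanSpace ℝ (Fin N) → ℝ)
    (hlow : ∀ A, max (lam * ‖A‖ - 1) 0 ≤ Φ A)
    (hup : ∀ A, Φ A ≤ Lam * ‖A‖ + 1)
    (q p : EuclideanSpace ℝ (Fin N) → EuclideanSpace ℝ (Fin N))
    (hq : ∀ x, HasGradientAt Φ (q x) x)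
    (hqb : ∀ A, ‖q A‖ ≤ Lam)
    (hp : ∀ x, HasGradientAt (convexEnvelope Φ) (p x) x)
    (ν₁ ν₂ : Measure (EuclideanSpace ℝ (Fin N)))
    [IsProbabilityMeasure ν₁] [IsProbabilityMeasure ν₂]
    (hconc₁ : ν₁ {A : EuclideanSpace ℝ (Fin N) | convexEnvelope Φ A = Φ A}ᶜ = 0)
    (hconc₂ : ν₂ {A : EuclideanSpace ℝ (Fin N) | convexEnvelope Φ A = Φ A}ᶜ = 0)
    (hmom₁ : Integrable (fun A : EuclideanSpace ℝ (Fin N) => ‖A‖) ν₁)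
    (hmom₂ : Integrable (fun A : EuclideanSpace ℝ (Fin N) => ‖A‖) ν₂) :
    (0 : ℝ) ≤
      (∫ A, (inner ℝ (q A) A : ℝ) ∂ν₁) + (∫ B, (inner ℝ (q B) B : ℝ) ∂ν₂)
        - (inner ℝ (∫ B, q B ∂ν₂) (∫ A, A ∂ν₁) : ℝ)
        - (inner ℝ (∫ A, q A ∂ν₁) (∫ B, B ∂ν₂) : ℝ) := by
  classical
  have hΦ0 : ∀ z, 0 ≤ Φ z := fun z => le_trans (le_max_right _ _) (hlow z)
  have hEle : ∀ z, convexEnvelope Φ z ≤ Φ z := env_le hΦ0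
  have hEc : ConvexOn ℝ Set.univ (convexEnvelope Φ) := env_convex hΦ0
  set S : Set (EuclideanSpace ℝ (Fin N)) :=
    {A | convexEnvelope Φ A = Φ A} with hS
  have key : ∀ A ∈ S, ∀ B ∈ S, (0:ℝ) ≤ inner ℝ (q A - q B) (A - B) := by
    intro A hA B hB
    rw [grad_eq_on_contact hEle hA (hq A) (hp A),
      grad_eq_on_contact hEle hB (hq B) (hp B)]
    exact convex_grad_mono' hEc (hp A) (hp B)
  -- integrability facts
  have hid₁ := id_int ν₁ hmom₁
  have hid₂ := id_int ν₂ hmom₂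
  have hqint₁ := q_int ν₁ Φ q hq Lam hqb
  have hqint₂ := q_int ν₂ Φ q hq Lam hqb
  have hqB₁ := qB_int ν₁ Φ q hq Lam hqb hmom₁
  have hqB₂ := qB_int ν₂ Φ q hq Lam hqb hmom₂
  set m₁ := ∫ A, A ∂ν₁ with hm₁
  set m₂ := ∫ B, B ∂ν₂ with hm₂
  set k₁ := ∫ A, q A ∂ν₁ with hk₁
  set k₂ := ∫ B, q B ∂ν₂ with hk₂
  set c₂ := ∫ B, (inner ℝ (q B) B : ℝ) ∂ν₂ with hc₂
  set G : EuclideanSpace ℝ (Fin N) → ℝ :=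
    fun A => (inner ℝ (q A) A : ℝ) - inner ℝ (q A) m₂ - inner ℝ k₂ A + c₂ with hG
  have hae₂ : ∀ᵐ B ∂ν₂, B ∈ S := by
    rw [MeasureTheory.ae_iff]
    exact hconc₂
  have hae₁ : ∀ᵐ A ∂ν₁, A ∈ S := by
    rw [MeasureTheory.ae_iff]
    exact hconc₁
  -- Step A : G is nonneg on S
  have hGpos : ∀ A ∈ S, 0 ≤ G A := by
    intro A hA
    have h1 : ∫ B, (inner ℝ (q A) B : ℝ) ∂ν₂ = inner ℝ (q A) m₂ :=
      integral_inner hid₂ (q A)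
    have h2 : ∫ B, (inner ℝ (q B) A : ℝ) ∂ν₂ = inner ℝ k₂ A := by
      have hc : ∀ B : EuclideanSpace ℝ (Fin N),
          (inner ℝ (q B) A : ℝ) = inner ℝ A (q B) := fun B => real_inner_comm _ _
      simp_rw [hc]
      rw [integral_inner hqint₂ A, hk₂, real_inner_comm]
    have i2 : Integrable (fun B => (inner ℝ (q A) B : ℝ)) ν₂ := hid₂.const_inner (q A)
    have i3 : Integrable (fun B => (inner ℝ (q B) A : ℝ)) ν₂ := hqint₂.inner_const A
    have i1 : Integrable (fun B => (inner ℝ (q A) A : ℝ) - inner ℝ (q A) B) ν₂ :=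
      (integrable_const _).sub i2
    have i12 : Integrable
        (fun B => (inner ℝ (q A) A : ℝ) - inner ℝ (q A) B - inner ℝ (q B) A) ν₂ := i1.sub i3
    have hGeq : G A = ∫ B, ((inner ℝ (q A) A : ℝ) - inner ℝ (q A) B
        - inner ℝ (q B) A + inner ℝ (q B) B) ∂ν₂ := by
      rw [integral_add i12 hqB₂, integral_sub i1 i3,
        integral_sub (integrable_const _) i2, integral_const, h1, h2, ← hc₂]
      simp only [hG, measure_univ, ENNReal.toReal_one, probReal_univ, one_smul]
    rw [hGeq]
    apply integral_nonneg_of_ae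
    filter_upwards [hae₂] with B hB
    have hk := key A hA B hB
    have expand : (inner ℝ (q A - q B) (A - B) : ℝ)
        = (inner ℝ (q A) A : ℝ) - inner ℝ (q A) B - inner ℝ (q B) A + inner ℝ (q B) B := by
      simp [inner_sub_left, inner_sub_right]; ring
    rw [expand] at hk
    simpa using hk
  -- Step C : 0 ≤ ∫ G dν₁
  have hGint : Integrable G ν₁ := by
    exact ((hqB₁.sub (hqint₁.inner_const m₂)).sub (hid₁.const_inner k₂)).add
      (integrable_const c₂)
  have hpos : (0:ℝ) ≤ ∫ A, G A ∂ν₁ := by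
    apply integral_nonneg_of_ae
    filter_upwards [hae₁] with A hA
    simpa using hGpos A hA
  -- Step B : ∫ G dν₁ equals the target expression
  have h3 : ∫ A, (inner ℝ (q A) m₂ : ℝ) ∂ν₁ = inner ℝ k₁ m₂ := by
    have hc : ∀ A : EuclideanSpace ℝ (Fin N),
        (inner ℝ (q A) m₂ : ℝ) = inner ℝ m₂ (q A) := fun A => real_inner_comm _ _
    simp_rw [hc]
    rw [integral_inner hqint₁ m₂, hk₁, real_inner_comm]
  have h4 : ∫ A, (inner ℝ k₂ A : ℝ) ∂ν₁ = inner ℝ k₂ m₁ := integral_inner hid₁ k₂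
  have hBeq : ∫ A, G A ∂ν₁ = (∫ A, (inner ℝ (q A) A : ℝ) ∂ν₁) + c₂
      - inner ℝ k₁ m₂ - inner ℝ k₂ m₁ := by
    have j2 : Integrable (fun A => (inner ℝ (q A) m₂ : ℝ)) ν₁ := hqint₁.inner_const m₂
    have j3 : Integrable (fun A => (inner ℝ k₂ A : ℝ)) ν₁ := hid₁.const_inner k₂
    have j1 : Integrable (fun A => (inner ℝ (q A) A : ℝ) - inner ℝ (q A) m₂) ν₁ := hqB₁.sub j2
    have j12 : Integrable
        (fun A => (inner ℝ (q A) A : ℝ) - inner ℝ (q A) m₂ - inner ℝ k₂ A) ν₁ := j1.sub j3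
    simp only [hG]
    rw [integral_add j12 (integrable_const c₂), integral_sub j1 j3,
      integral_sub hqB₁ j2, integral_const, h3, h4]
    simp
    ring
  rw [hBeq] at hpos
  linarith
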